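/- arXiv:0709.1452 — 5 statements merged into one kernel-verified Lean document; each statement's English description precedes it below -/
import Mathlib

section
/- Let p be a projection operator on a vector space W with nondegenerate symmetric bilinear form. If both the kernel and the range of p are isotropic subspaces, then p + pᵗ = 1. Conversely, if p is a projection with p + pᵗ = 1, then both ker(p) and range(p) are isotropic. -/
/-- Let `p` be a projection operator on a vector space `W` with a nondegenerate
symmetric bilinear form `B`. Then the kernel and the range of `p` are both isotropic if and
only if `p + pᵗ = 1`, the latter condition being expressed as
`B (p w) w' + B w (p w') = B w w'` for all `w, w'`. -/
theorem pure_spinors_stmt1 {K W : Type*} [Field K] [AddCommGroup W] [Module K W]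
    [FiniteDimensional K W] (B : LinearMap.BilinForm K W)
    (hsymm : ∀ x y, B x y = B y x) (hnd : B.Nondegenerate)
    (p : W →ₗ[K] W) (hp : p ∘ₗ p = p) :
    ((∀ x ∈ LinearMap.ker p, ∀ y ∈ LinearMap.ker p, B x y = 0) ∧
     (∀ x ∈ LinearMap.range p, ∀ y ∈ LinearMap.range p, B x y = 0)) ↔
    (∀ w w', B (p w) w' + B w (p w') = B w w') := by
  have hpp : ∀ x, p (p x) = p x := by
    intro x
    have := LinearMap.ext_iff.mp hp x
    simpa using this
  constructor
  · rintro ⟨hker, hran⟩ w w'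
    have hkw : w - p w ∈ LinearMap.ker p := by
      simp [LinearMap.mem_ker, map_sub, hpp]
    have hkw' : w' - p w' ∈ LinearMap.ker p := by
      simp [LinearMap.mem_ker, map_sub, hpp]
    have h1 : B (p w) (p w') = 0 := hran _ ⟨w, rfl⟩ _ ⟨w', rfl⟩
    have h2 : B (w - p w) (w' - p w') = 0 := hker _ hkw _ hkw'
    have e1 : B w w' = B (p w) (p w') + B (p w) (w' - p w') + B (w - p w) (p w')
        + B (w - p w) (w' - p w') := by
      have : w = p w + (w - p w) := by abel
      have : w' = p w' + (w' - p w') := by abel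
      simp only [map_sub, map_add, LinearMap.sub_apply, LinearMap.add_apply]
      ring
    have e2 : B (p w) w' = B (p w) (p w') + B (p w) (w' - p w') := by
      simp only [map_sub, map_add]; ring
    have e3 : B w (p w') = B (p w) (p w') + B (w - p w) (p w') := by
      simp only [map_sub, map_add, LinearMap.sub_apply, LinearMap.add_apply]; ring
    rw [e1, e2, e3, h1, h2]; ring
  · intro h
    constructor
    · intro x hx y hy
      have := h x y
      rw [LinearMap.mem_ker.mp hx, LinearMap.mem_ker.mp hy] at this
      simpa using this.symm
    · rintro x ⟨a, rfl⟩ y ⟨b, rfl⟩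
      have := h (p a) b
      rw [hpp] at this
      linear_combination this
end

section
/- Let V be a vector space and 𝕍 = V ⊕ V* with the split bilinear form ⟨v₁⊕α₁, v₂⊕α₂⟩ = α₁(v₂) + α₂(v₁). For any nonzero element φ of the exterior algebra ∧V*, the null space N_φ = {v⊕α ∈ 𝕍 : ι(v)φ + α∧φ = 0} is an isotropic subspace of 𝕍. -/
set_option maxHeartbeats 1000000
open ExteriorAlgebra CliffordAlgebra Module

/-- The Clifford action of `w = v ⊕ α ∈ V ⊕ V*` on the contravariant spinor module `∧ V*`:
`ρ(w)φ = ι(v)φ + α ∧ φ`. -/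
noncomputable def cliffordRho {K V : Type*} [Field K] [AddCommGroup V] [Module K V]
    (w : V × Module.Dual K V) (φ : ExteriorAlgebra K (Module.Dual K V)) :
    ExteriorAlgebra K (Module.Dual K V) :=
  CliffordAlgebra.contractLeft (Module.Dual.eval K V w.1) φ + ExteriorAlgebra.ι K w.2 * φ

/-- For any nonzero `φ ∈ ∧V*`, the null space
`N_φ = {v ⊕ α : ι(v)φ + α ∧ φ = 0}` is isotropic for the pairing bilinear form
`⟨v₁⊕α₁, v₂⊕α₂⟩ = α₁(v₂) + α₂(v₁)` on `𝕍 = V ⊕ V*`. -/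
theorem pure_spinors_stmt2 {K V : Type*} [Field K] [CharZero K] [AddCommGroup V] [Module K V]
    [FiniteDimensional K V]
    (φ : ExteriorAlgebra K (Module.Dual K V)) (hφ : φ ≠ 0)
    (w w' : V × Module.Dual K V)
    (hw : cliffordRho w φ = 0) (hw' : cliffordRho w' φ = 0) :
    w.2 w'.1 + w'.2 w.1 = 0 := by
  have key : cliffordRho w (cliffordRho w' φ) + cliffordRho w' (cliffordRho w φ)
      = (w.2 w'.1 + w'.2 w.1) • φ := by
    unfold cliffordRho
    rw [map_add, map_add, mul_add, mul_add,
      CliffordAlgebra.contractLeft_ι_mul, CliffordAlgebra.contractLeft_ι_mul,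
      CliffordAlgebra.contractLeft_comm]
    have hmul : ExteriorAlgebra.ι K w.2 * (ExteriorAlgebra.ι K w'.2 * φ)
        = -(ExteriorAlgebra.ι K w'.2 * (ExteriorAlgebra.ι K w.2 * φ)) := by
      have := ExteriorAlgebra.ι_add_mul_swap (R := K) w.2 w'.2
      rw [← mul_assoc, ← mul_assoc, eq_neg_of_add_eq_zero_left (by rw [← add_mul, this, zero_mul]
        : ExteriorAlgebra.ι K w.2 * ExteriorAlgebra.ι K w'.2 * φ
          + ExteriorAlgebra.ι K w'.2 * ExteriorAlgebra.ι K w.2 * φ = 0)]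
    rw [hmul]
    simp only [Module.Dual.eval_apply]
    module
  rw [hw, hw'] at key
  simp only [cliffordRho, map_zero, mul_zero, add_zero] at key
  rcases smul_eq_zero.mp key.symm with h | h
  · exact h
  · exact absurd h hφ
end

section
/- Let V be a finite-dimensional vector space and ω ∈ ∧²V* a 2-form. Then φ = exp(-ω) ∈ ∧V* is a pure spinor whose null space is the graph Gr_ω = {v ⊕ ι(v)ω : v ∈ V} ⊆ V ⊕ V*. In particular, Gr_ω is a Lagrangian subspace of V ⊕ V*. -/
set_option maxHeartbeats 1000000
set_option synthInstance.maxHeartbeats 400000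

open ExteriorAlgebra CliffordAlgebra Module

/-- Truncated exponential in an algebra, valid for nilpotent arguments of index `≤ n`. -/
noncomputable def expA {K A : Type*} [Field K] [Ring A] [Algebra K A] (n : ℕ) (a : A) : A :=
  ∑ k ∈ Finset.range (n + 1), (k.factorial : K)⁻¹ • a ^ k

section Aux
variable {K : Type*} [Field K] {N : Type*} [AddCommGroup N] [Module K N]

lemma aux_anticomm (u v : N) :
    ι K u * ι K v = -(ι K v * ι K u) := by
  have := CliffordAlgebra.ι_mul_ι_add_swap (Q := (0 : QuadraticForm K N)) u v
  simp only [QuadraticMap.polar, QuadraticMap.zero_apply, sub_zero, sub_self, map_zero] at this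
  exact eq_neg_of_add_eq_zero_left this

lemma aux_mem_mul {ω : ExteriorAlgebra K N} (hω : ω ∈ ⋀[K]^2 N) :
    ω ∈ LinearMap.range (ι K : N →ₗ[K] ExteriorAlgebra K N) *
        LinearMap.range (ι K : N →ₗ[K] ExteriorAlgebra K N) := by
  rwa [← pow_two]

lemma aux_counit {ω : ExteriorAlgebra K N} (hω : ω ∈ ⋀[K]^2 N) :
    algebraMapInv ω = (0 : K) := by
  refine Submodule.mul_induction_on (aux_mem_mul hω) ?_ ?_
  · rintro _ ⟨a, rfl⟩ _ ⟨b, rfl⟩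
    simp [algebraMapInv]
  · intro x y hx hy; rw [map_add, hx, hy, add_zero]

lemma aux_contract_mem (f : Module.Dual K N) {ω : ExteriorAlgebra K N} (hω : ω ∈ ⋀[K]^2 N) :
    contractLeft f ω ∈ LinearMap.range (ι K : N →ₗ[K] ExteriorAlgebra K N) := by
  refine Submodule.mul_induction_on (aux_mem_mul hω) ?_ ?_
  · rintro _ ⟨a, rfl⟩ _ ⟨b, rfl⟩
    rw [contractLeft_ι_mul, contractLeft_ι, ← Algebra.commutes, ← Algebra.smul_def]
    exact sub_mem (Submodule.smul_mem _ _ (LinearMap.mem_range_self _ b))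
      (Submodule.smul_mem _ _ (LinearMap.mem_range_self _ a))
  · intro x y hx hy; rw [map_add]; exact add_mem hx hy

lemma aux_ι_comm (a : N) {ω : ExteriorAlgebra K N} (hω : ω ∈ ⋀[K]^2 N) :
    ι K a * ω = ω * ι K a := by
  refine Submodule.mul_induction_on (aux_mem_mul hω) ?_ ?_
  · rintro _ ⟨x, rfl⟩ _ ⟨y, rfl⟩
    rw [← mul_assoc, aux_anticomm a x, neg_mul, mul_assoc, aux_anticomm a y, mul_neg, neg_neg,
      mul_assoc]
  · intro x y hx hy; rw [mul_add, add_mul, hx, hy]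

lemma aux_leibniz (f : Module.Dual K N) {ω : ExteriorAlgebra K N} (hω : ω ∈ ⋀[K]^2 N)
    (x : ExteriorAlgebra K N) :
    contractLeft f (ω * x) = contractLeft f ω * x + ω * contractLeft f x := by
  refine Submodule.mul_induction_on (C := fun ω =>
      contractLeft f (ω * x) = contractLeft f ω * x + ω * contractLeft f x)
    (aux_mem_mul hω) ?_ ?_
  · rintro _ ⟨a, rfl⟩ _ ⟨b, rfl⟩
    rw [mul_assoc, contractLeft_ι_mul, contractLeft_ι_mul, contractLeft_ι_mul, contractLeft_ι,
      ← Algebra.commutes, ← Algebra.smul_def]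
    simp only [mul_sub, sub_mul, smul_mul_assoc, mul_smul_comm, smul_sub, mul_assoc]
    abel
  · intro a b iha ihb
    rw [add_mul, map_add, map_add, iha, ihb, add_mul, add_mul]
    abel

lemma aux_contract_pow (f : Module.Dual K N) {ω : ExteriorAlgebra K N} (hω : ω ∈ ⋀[K]^2 N)
    (k : ℕ) :
    contractLeft f (ω ^ (k + 1)) = (k + 1) • (contractLeft f ω * ω ^ k) := by
  induction k with
  | zero => simp
  | succ k ih =>
    obtain ⟨γ, hγ⟩ := aux_contract_mem f hω
    rw [pow_succ' (n := k + 1), aux_leibniz f hω, ih, mul_smul_comm, ← mul_assoc,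
      ← hγ, ← aux_ι_comm γ hω, hγ, mul_assoc, ← pow_succ']
    rw [succ_nsmul (contractLeft f ω * ω ^ (k + 1)) (k + 1)]
    abel

lemma aux_vanish [FiniteDimensional K N] {m : ℕ} (hm : Module.finrank K N < m)
    {x : ExteriorAlgebra K N} (hx : x ∈ ⋀[K]^m N) : x = 0 := by
  rw [← ExteriorAlgebra.ιMulti_span_fixedDegree] at hx
  induction hx using Submodule.span_induction with
  | mem x hx =>
    obtain ⟨v, rfl⟩ := hx
    refine AlternatingMap.map_linearDependent _ v (fun h => absurd h.fintype_card_le_finrank ?_)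
    simpa using hm.not_ge
  | zero => rfl
  | add x y _ _ ihx ihy => rw [ihx, ihy, add_zero]
  | smul c x _ ihx => rw [ihx, smul_zero]
end Aux

section Aux3
variable {K V : Type*} [Field K] [AddCommGroup V] [Module K V]

lemma aux_skew {ω : ExteriorAlgebra K (Module.Dual K V)} {x y : V} {α β : Module.Dual K V}
    (hx : contractLeft (Module.Dual.eval K V x) ω = ι K α)
    (hy : contractLeft (Module.Dual.eval K V y) ω = ι K β) :
    α y + β x = 0 := by
  have h := CliffordAlgebra.contractLeft_comm (d := Module.Dual.eval K V y)
      (d' := Module.Dual.eval K V x) ω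
  rw [hx, hy, contractLeft_ι, contractLeft_ι] at h
  have h2 := congrArg (ExteriorAlgebra.algebraMapInv (R := K)) h
  rw [map_neg, ExteriorAlgebra.algebraMap_leftInverse _ _,
    ExteriorAlgebra.algebraMap_leftInverse _ _] at h2
  simp only [Module.Dual.eval_apply] at h2
  rw [h2]; abel

variable [CharZero K] [FiniteDimensional K V]

lemma aux_dphi {ω : ExteriorAlgebra K (Module.Dual K V)}
    (hω : ω ∈ ⋀[K]^2 (Module.Dual K V)) (f : Module.Dual K (Module.Dual K V)) :
    contractLeft f (expA (K := K) (Module.finrank K V) (-ω)) =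
      (-(contractLeft f ω)) * expA (K := K) (Module.finrank K V) (-ω) := by
  set n := Module.finrank K V with hn
  have hτ : -ω ∈ ⋀[K]^2 (Module.Dual K V) := neg_mem hω
  have hzero : contractLeft f (-ω) * (-ω) ^ n = 0 := by
    refine aux_vanish (m := 2 * n + 1) ?_ ?_
    · rw [Subspace.dual_finrank_eq]; omega
    · have h1 : (-ω) ^ n ∈ (⋀[K]^2 (Module.Dual K V)) ^ n := Submodule.pow_mem_pow _ hτ n
      rw [← pow_mul] at h1
      have h2 := Submodule.mul_mem_mul (aux_contract_mem f hτ) h1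
      rwa [← pow_succ'] at h2
  have key : ∀ k : ℕ, ((k + 1).factorial : K)⁻¹ • contractLeft f ((-ω) ^ (k + 1))
      = (k.factorial : K)⁻¹ • (contractLeft f (-ω) * (-ω) ^ k) := by
    intro k
    rw [aux_contract_pow f hτ, ← Nat.cast_smul_eq_nsmul K, smul_smul]
    congr 1
    rw [Nat.factorial_succ]
    push_cast
    have hk : ((k : K) + 1) ≠ 0 := Nat.cast_add_one_ne_zero k
    have hf : ((k.factorial : K)) ≠ 0 := Nat.cast_ne_zero.mpr k.factorial_ne_zero
    field_simp
  have hτω : contractLeft f (-ω) = -(contractLeft f ω) := map_neg _ ω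
  calc contractLeft f (expA (K := K) n (-ω))
      = ∑ k ∈ Finset.range (n + 1), (k.factorial : K)⁻¹ • contractLeft f ((-ω) ^ k) := by
        rw [expA, map_sum]; simp only [map_smul]
    _ = ∑ k ∈ Finset.range n, (k.factorial : K)⁻¹ • (contractLeft f (-ω) * (-ω) ^ k) := by
        rw [Finset.sum_range_succ']
        simp only [key]
        simp [CliffordAlgebra.contractLeft_one]
    _ = (-(contractLeft f ω)) * expA (K := K) n (-ω) := by
        rw [expA, Finset.mul_sum, Finset.sum_range_succ, ← hτω]
        simp only [mul_smul_comm]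
        rw [hzero, smul_zero, add_zero]
end Aux3

/-- For a 2-form `ω ∈ ∧²V*`, the element `φ = exp(-ω) ∈ ∧V*` is a pure spinor
whose null space is the graph `Gr_ω = {v ⊕ ι(v)ω : v ∈ V}`; in particular `Gr_ω` is
Lagrangian (equal to its own orthogonal) in `V ⊕ V*` with the pairing bilinear form. -/
theorem pure_spinors_stmt3 {K V : Type*} [Field K] [CharZero K] [AddCommGroup V] [Module K V]
    [FiniteDimensional K V]
    (ω : ExteriorAlgebra K (Module.Dual K V))
    (hω : ω ∈ (⋀[K]^2 (Module.Dual K V)))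
    (φ : ExteriorAlgebra K (Module.Dual K V))
    (hφ : φ = expA (K := K) (Module.finrank K V) (-ω)) :
    φ ≠ 0 ∧
    (∀ w : V × Module.Dual K V,
      cliffordRho w φ = 0 ↔
        CliffordAlgebra.contractLeft (Module.Dual.eval K V w.1) ω = ExteriorAlgebra.ι K w.2) ∧
    (∀ w : V × Module.Dual K V,
      (∀ u : V × Module.Dual K V,
          CliffordAlgebra.contractLeft (Module.Dual.eval K V u.1) ω = ExteriorAlgebra.ι K u.2 →
          w.2 u.1 + u.2 w.1 = 0) ↔
        CliffordAlgebra.contractLeft (Module.Dual.eval K V w.1) ω = ExteriorAlgebra.ι K w.2) := by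
  set n := Module.finrank K V with hn
  refine ⟨?_, ?_, ?_⟩
  · -- φ ≠ 0
    intro h0
    have h1 : ExteriorAlgebra.algebraMapInv (R := K) φ = 1 := by
      rw [hφ, expA, map_sum, Finset.sum_range_succ']
      have hz : ∀ k ∈ Finset.range n,
          ExteriorAlgebra.algebraMapInv (R := K)
            ((((k + 1).factorial : K)⁻¹) • (-ω) ^ (k + 1)) = 0 := by
        intro k _
        rw [map_smul, map_pow, aux_counit (neg_mem hω), zero_pow (Nat.succ_ne_zero k), smul_zero]
      rw [Finset.sum_eq_zero hz, zero_add]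
      simp
    rw [h0, map_zero] at h1
    exact zero_ne_one h1
  · intro w
    have hrho : cliffordRho w φ =
        (ExteriorAlgebra.ι K w.2 - contractLeft (Module.Dual.eval K V w.1) ω) * φ := by
      simp only [cliffordRho]
      rw [hφ, aux_dphi hω, sub_mul, neg_mul]
      abel
    rw [hrho]
    constructor
    · intro h
      obtain ⟨γ, hγ⟩ := aux_contract_mem (Module.Dual.eval K V w.1) hω
      rw [← hγ, ← map_sub] at h
      set δ := w.2 - γ with hδdef
      have hmemP : ExteriorAlgebra.ι K δ ∈
          LinearMap.range (ι K : Module.Dual K V →ₗ[K] ExteriorAlgebra K (Module.Dual K V)) :=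
        LinearMap.mem_range_self _ _
      have hmem1 : ExteriorAlgebra.ι K δ ∈ ⋀[K]^1 (Module.Dual K V) := by
        rw [show (⋀[K]^1 (Module.Dual K V) : Submodule K (ExteriorAlgebra K (Module.Dual K V)))
            = LinearMap.range
              (ι K : Module.Dual K V →ₗ[K] ExteriorAlgebra K (Module.Dual K V)) from pow_one _]
        exact hmemP
      have hsum : ExteriorAlgebra.ι K δ * φ = ExteriorAlgebra.ι K δ + ∑ k ∈ Finset.range n,
          (((k + 1).factorial : K)⁻¹) • (ExteriorAlgebra.ι K δ * (-ω) ^ (k + 1)) := by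
        rw [hφ, expA, Finset.mul_sum]
        simp only [mul_smul_comm]
        rw [Finset.sum_range_succ', add_comm]
        congr 1
        simp
      let π : ExteriorAlgebra K (Module.Dual K V) →ₗ[K] ExteriorAlgebra K (Module.Dual K V) :=
        (Submodule.subtype _) ∘ₗ (DFinsupp.lapply 1) ∘ₗ
          (DirectSum.decomposeLinearEquiv
            (fun i : ℕ => ⋀[K]^i (Module.Dual K V))).toLinearMap
      have hπdef : ∀ z, π z =
          (DirectSum.decompose (fun i : ℕ => ⋀[K]^i (Module.Dual K V)) z 1 :
            ExteriorAlgebra K (Module.Dual K V)) := fun _ => rfl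
      have h2 : π (ExteriorAlgebra.ι K δ * φ) = 0 := by rw [h, map_zero]
      rw [hsum, map_add, map_sum] at h2
      have hz : ∀ k ∈ Finset.range n,
          π ((((k + 1).factorial : K)⁻¹) • (ExteriorAlgebra.ι K δ * (-ω) ^ (k + 1))) = 0 := by
        intro k _
        have hm : ExteriorAlgebra.ι K δ * (-ω) ^ (k + 1) ∈
            ⋀[K]^(2 * (k + 1) + 1) (Module.Dual K V) := by
          have h1' : (-ω) ^ (k + 1) ∈ (⋀[K]^2 (Module.Dual K V)) ^ (k + 1) :=
            Submodule.pow_mem_pow _ (neg_mem hω) (k + 1)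
          rw [← pow_mul] at h1'
          have h2' := Submodule.mul_mem_mul hmemP h1'
          rwa [← pow_succ'] at h2'
        rw [map_smul, hπdef,
          DirectSum.decompose_of_mem_ne (fun i : ℕ => ⋀[K]^i (Module.Dual K V)) hm
            (by omega : 2 * (k + 1) + 1 ≠ 1),
          smul_zero]
      rw [Finset.sum_eq_zero hz, add_zero, hπdef,
        DirectSum.decompose_of_mem_same (fun i : ℕ => ⋀[K]^i (Module.Dual K V)) hmem1] at h2
      have hδ0 : δ = 0 := by rwa [ExteriorAlgebra.ι_eq_zero_iff] at h2
      rw [hδdef, sub_eq_zero] at hδ0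
      rw [← hγ, hδ0]
    · intro h
      rw [h, sub_self, zero_mul]
  · intro w
    constructor
    · intro H
      obtain ⟨γ, hγ⟩ := aux_contract_mem (Module.Dual.eval K V w.1) hω
      have hw2 : w.2 = γ := by
        ext x
        obtain ⟨α, hα⟩ := aux_contract_mem (Module.Dual.eval K V x) hω
        have h1 := H (x, α) hα.symm
        have h2 := aux_skew (x := x) (y := w.1) hα.symm hγ.symm
        simp only at h1 h2 ⊢
        linear_combination h1 - h2
      rw [← hγ, hw2]
    · intro h u hu
      have hsw := aux_skew (x := u.1) (y := w.1) hu h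
      rw [add_comm]
      exact hsw
end

section
/- Let V be a finite-dimensional vector space with 𝕍 = V ⊕ V*. For a pure spinor φ = exp(-ω_Q) ∧ θ, where ω_Q is a 2-form on a subspace Q ⊆ V extended arbitrarily to V, and θ is a nonzero element of the top exterior power of the annihilator of Q, the corresponding Lagrangian subspace is N_φ = {v ⊕ α : v ∈ Q, α|_Q = ι(v)ω_Q}. In particular, the projection of N_φ to V is Q, and N_φ ∩ V equals the kernel of ω_Q. -/
open ExteriorAlgebra CliffordAlgebra Module

namespace PureSpinorAux

variable {K M : Type*} [Field K] [AddCommGroup M] [Module K M]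

lemma ι_anticomm (a b : M) :
    ExteriorAlgebra.ι K a * ExteriorAlgebra.ι K b = -(ExteriorAlgebra.ι K b * ExteriorAlgebra.ι K a) := by
  have h := CliffordAlgebra.ι_mul_ι_add_swap (Q := (0 : QuadraticForm K M)) a b
  have h2 : ExteriorAlgebra.ι K a * ExteriorAlgebra.ι K b
      + ExteriorAlgebra.ι K b * ExteriorAlgebra.ι K a = 0 := by
    simpa [QuadraticMap.polar] using h
  exact eq_neg_of_add_eq_zero_left h2

lemma comm_of_sq {x : ExteriorAlgebra K M} (hx : x ∈ (⋀[K]^2 M)) (a : M) :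
    ExteriorAlgebra.ι K a * x = x * ExteriorAlgebra.ι K a := by
  rw [show (⋀[K]^2 M) = LinearMap.range (ExteriorAlgebra.ι K (M := M)) *
      LinearMap.range (ExteriorAlgebra.ι K (M := M)) from pow_two _] at hx
  refine Submodule.mul_induction_on (C := fun z =>
      ExteriorAlgebra.ι K a * z = z * ExteriorAlgebra.ι K a) hx ?_ ?_
  · rintro _ ⟨b, rfl⟩ _ ⟨c, rfl⟩
    rw [← mul_assoc, ι_anticomm a b, neg_mul, mul_assoc, ι_anticomm a c, mul_neg, neg_neg,
      mul_assoc]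
  · intro x y hx hy
    rw [mul_add, add_mul, hx, hy]

lemma contract_mul_of_sq (f : Module.Dual K M) {x : ExteriorAlgebra K M}
    (hx : x ∈ (⋀[K]^2 M)) (y : ExteriorAlgebra K M) :
    contractLeft f (x * y) = contractLeft f x * y + x * contractLeft f y := by
  rw [show (⋀[K]^2 M) = LinearMap.range (ExteriorAlgebra.ι K (M := M)) *
      LinearMap.range (ExteriorAlgebra.ι K (M := M)) from pow_two _] at hx
  refine Submodule.mul_induction_on (C := fun z => ∀ y : ExteriorAlgebra K M,
      contractLeft f (z * y) = contractLeft f z * y + z * contractLeft f y) hx ?_ ?_ y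
  · rintro _ ⟨b, rfl⟩ _ ⟨c, rfl⟩ y
    rw [mul_assoc, contractLeft_ι_mul, contractLeft_ι_mul, contractLeft_ι_mul, contractLeft_ι,
      ← Algebra.commutes, ← Algebra.smul_def]
    simp only [smul_sub, mul_sub, sub_mul, smul_mul_assoc, mul_smul_comm, mul_assoc]
    abel
  · intro x z hx hz y
    simp only [add_mul, map_add, hx y, hz y]
    abel

lemma contract_sq_mem (f : Module.Dual K M) {x : ExteriorAlgebra K M}
    (hx : x ∈ (⋀[K]^2 M)) :
    contractLeft f x ∈ LinearMap.range (ExteriorAlgebra.ι K (M := M)) := by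
  rw [show (⋀[K]^2 M) = LinearMap.range (ExteriorAlgebra.ι K (M := M)) *
      LinearMap.range (ExteriorAlgebra.ι K (M := M)) from pow_two _] at hx
  refine Submodule.mul_induction_on (C := fun z =>
      contractLeft f z ∈ LinearMap.range (ExteriorAlgebra.ι K (M := M))) hx ?_ ?_
  · rintro _ ⟨b, rfl⟩ _ ⟨c, rfl⟩
    rw [contractLeft_ι_mul, contractLeft_ι, ← Algebra.commutes, ← Algebra.smul_def]
    exact sub_mem (Submodule.smul_mem _ _ (LinearMap.mem_range_self _ _))
      (Submodule.smul_mem _ _ (LinearMap.mem_range_self _ _))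
  · intro x y hx hy
    rw [map_add]
    exact add_mem hx hy

lemma contract_pow_of_sq (f : Module.Dual K M) {x : ExteriorAlgebra K M}
    (hx : x ∈ (⋀[K]^2 M)) (k : ℕ) :
    contractLeft f (x ^ (k + 1)) = (k + 1) • (contractLeft f x * x ^ k) := by
  induction k with
  | zero => simp
  | succ k ih =>
    have hcx : x * contractLeft f x = contractLeft f x * x := by
      obtain ⟨γ, hγ⟩ := contract_sq_mem f hx
      rw [← hγ, comm_of_sq hx]
    rw [pow_succ' x (k + 1), contract_mul_of_sq f hx, ih, mul_smul_comm, ← mul_assoc, hcx,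
      mul_assoc, ← pow_succ', succ_nsmul _ (k + 1)]
    exact add_comm _ _

variable [CharZero K]

lemma contract_expA (f : Module.Dual K M) {x : ExteriorAlgebra K M} {n : ℕ}
    (hx : x ∈ (⋀[K]^2 M)) (hbot : (⋀[K]^(2 * n + 1) M) = ⊥) :
    contractLeft f (expA (K := K) n x) = contractLeft f x * expA (K := K) n x := by
  have hxn : x ^ n ∈ (⋀[K]^(2 * n) M) := by
    have := Submodule.pow_mem_pow _ hx n
    rwa [← pow_mul] at this
  have hkey : contractLeft f x * x ^ n = 0 := by
    have h1 : contractLeft f x ∈ (⋀[K]^1 M) := by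
      rw [show (⋀[K]^1 M) = LinearMap.range (ExteriorAlgebra.ι K (M := M)) from pow_one _]
      exact contract_sq_mem f hx
    have h2 := Submodule.mul_mem_mul h1 hxn
    rw [← pow_add] at h2
    rw [show 1 + 2 * n = 2 * n + 1 from by ring] at h2
    rw [← Submodule.mem_bot (R := K), ← hbot]
    exact h2
  have hstep : contractLeft f (expA (K := K) n x) =
      contractLeft f x * ∑ k ∈ Finset.range n, ((k.factorial : K)⁻¹ • x ^ k) := by
    rw [expA, map_sum, Finset.sum_range_succ']
    simp only [map_smul, pow_zero, Nat.factorial_zero, Nat.cast_one, inv_one, one_smul,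
      contractLeft_one, add_zero]
    rw [Finset.mul_sum]
    refine Finset.sum_congr rfl fun k _ => ?_
    rw [contract_pow_of_sq f hx k, ← Nat.cast_smul_eq_nsmul K, smul_smul, mul_smul_comm]
    congr 1
    have h1 : ((k.factorial : K)) ≠ 0 := Nat.cast_ne_zero.mpr k.factorial_ne_zero
    have h2 : (((k + 1) : ℕ) : K) ≠ 0 := Nat.cast_ne_zero.mpr (Nat.succ_ne_zero k)
    rw [Nat.factorial_succ, Nat.cast_mul, mul_inv, mul_comm (((k + 1) : ℕ) : K)⁻¹,
      mul_assoc, inv_mul_cancel₀ h2, mul_one]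
  rw [hstep, expA, Finset.sum_range_succ, mul_add, mul_smul_comm, hkey, smul_zero, add_zero]

lemma isUnit_expA {x : ExteriorAlgebra K M} {n : ℕ}
    (hx : x ∈ (⋀[K]^2 M)) (hbot : (⋀[K]^(2 * (n + 1)) M) = ⊥) :
    IsUnit (expA (K := K) n x) := by
  have hxpow : x ^ (n + 1) = 0 := by
    have h2 := Submodule.pow_mem_pow _ hx (n + 1)
    rw [← pow_mul] at h2
    rw [← Submodule.mem_bot (R := K), ← hbot]
    exact h2
  set C : ExteriorAlgebra K M :=
    ∑ k ∈ Finset.range n, (((k + 1).factorial : K)⁻¹ • x ^ k) with hC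
  have hcomm : Commute x C := by
    refine Commute.sum_right _ _ _ fun k _ => ?_
    exact Commute.smul_right (Commute.pow_right (Commute.refl x) k) _
  have hE : expA (K := K) n x = x * C + 1 := by
    rw [expA, Finset.sum_range_succ']
    simp only [pow_zero, Nat.factorial_zero, Nat.cast_one, inv_one, one_smul]
    congr 1
    rw [hC, Finset.mul_sum]
    refine Finset.sum_congr rfl fun k _ => ?_
    rw [pow_succ', mul_smul_comm]
  have hnil : IsNilpotent (x * C) := by
    refine ⟨n + 1, ?_⟩
    rw [hcomm.mul_pow, hxpow, zero_mul]
  rw [hE]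
  exact IsNilpotent.isUnit_add_one hnil

lemma contract_lower (f : Module.Dual K M) {k : ℕ} {x : ExteriorAlgebra K M}
    (hx : x ∈ (⋀[K]^k M)) :
    contractLeft f x ∈ (⋀[K]^(k - 1) M) ∧ (k = 0 → contractLeft f x = 0) := by
  induction hx using Submodule.pow_induction_on_left' with
  | algebraMap r =>
    constructor
    · rw [contractLeft_algebraMap]; exact zero_mem _
    · intro _; rw [contractLeft_algebraMap]
  | add x y i hx hy ihx ihy =>
    constructor
    · rw [map_add]; exact add_mem ihx.1 ihy.1
    · intro hi; rw [map_add, ihx.2 hi, ihy.2 hi, add_zero]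
  | mem_mul m hm i x hxi ih =>
    obtain ⟨b, rfl⟩ := hm
    constructor
    · rw [contractLeft_ι_mul]
      refine sub_mem ?_ ?_
      · rw [Nat.succ_sub_one]
        exact Submodule.smul_mem _ _ hxi
      · rcases i with _ | j
        · rw [ih.2 rfl, mul_zero]; exact zero_mem _
        · rw [Nat.succ_sub_one]
          have h3 := Submodule.mul_mem_mul
            (LinearMap.mem_range_self (ExteriorAlgebra.ι K (M := M)) b) ih.1
          rw [Nat.succ_sub_one] at h3
          rwa [← pow_succ'] at h3
    · intro h; exact absurd h (Nat.succ_ne_zero i)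

lemma exteriorPower_eq_bot [FiniteDimensional K M] {k : ℕ} (hk : finrank K M < k) :
    (⋀[K]^k M) = ⊥ := by
  rw [← ιMulti_span_fixedDegree, Submodule.span_eq_bot]
  rintro _ ⟨v, rfl⟩
  refine AlternatingMap.map_linearDependent _ _ fun hli => ?_
  have := hli.fintype_card_le_finrank
  rw [Fintype.card_fin] at this
  omega

lemma map_sub_pow_bot [FiniteDimensional K M] (A : Submodule K M) {k : ℕ}
    (hk : finrank K A < k) :
    (A.map (ExteriorAlgebra.ι K (M := M))) ^ k = ⊥ := by
  set F : ExteriorAlgebra K A →ₐ[K] ExteriorAlgebra K M :=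
    ExteriorAlgebra.lift K ⟨(ExteriorAlgebra.ι K (M := M)) ∘ₗ A.subtype,
      fun m => ExteriorAlgebra.ι_sq_zero _⟩ with hF
  have hmap : (LinearMap.range (ExteriorAlgebra.ι K (M := A))).map F.toLinearMap
      = A.map (ExteriorAlgebra.ι K (M := M)) := by
    rw [← LinearMap.range_comp]
    have : F.toLinearMap ∘ₗ ExteriorAlgebra.ι K (M := A) =
        (ExteriorAlgebra.ι K (M := M)) ∘ₗ A.subtype := by
      ext a
      simp [hF]
    rw [this, LinearMap.range_comp, Submodule.range_subtype]
  rw [← hmap, ← Submodule.map_pow]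
  have : (LinearMap.range (ExteriorAlgebra.ι K (M := A))) ^ k = ⊥ :=
    exteriorPower_eq_bot hk
  rw [this, Submodule.map_bot]

lemma pow_le_pow_of_le {A B : Submodule K (ExteriorAlgebra K M)} (h : A ≤ B) (k : ℕ) :
    A ^ k ≤ B ^ k := by
  induction k with
  | zero => simp
  | succ k ih =>
    rw [pow_succ, pow_succ]
    exact mul_le_mul' ih h

lemma homogeneous_split {i j : ℕ} (hij : i ≠ j) {x y : ExteriorAlgebra K M}
    (hx : x ∈ (⋀[K]^i M)) (hy : y ∈ (⋀[K]^j M)) (hxy : x + y = 0) : x = 0 ∧ y = 0 := by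
  classical
  have hx' := DirectSum.decompose_of_mem_same (fun i => (⋀[K]^i M)) hx
  have hy' := DirectSum.decompose_of_mem_ne (fun i => (⋀[K]^i M)) hy hij.symm
  have h0 : ((DirectSum.decompose (fun i => (⋀[K]^i M)) (x + y) i :
      (⋀[K]^i M)) : ExteriorAlgebra K M) = 0 := by
    rw [hxy, DirectSum.decompose_zero]
    simp
  have h1 : ((DirectSum.decompose (fun i => (⋀[K]^i M)) (x + y) i :
      (⋀[K]^i M)) : ExteriorAlgebra K M) = x := by
    rw [DirectSum.decompose_add, DirectSum.add_apply, Submodule.coe_add, hx', hy', add_zero]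
  have hx0 : x = 0 := by rw [← h1, h0]
  exact ⟨hx0, by rw [← hxy, hx0, zero_add]⟩


omit [CharZero K] in
lemma comm_pow_of_sq {x : ExteriorAlgebra K M} (hx : x ∈ (⋀[K]^2 M)) (a : M) (k : ℕ) :
    ExteriorAlgebra.ι K a * x ^ k = x ^ k * ExteriorAlgebra.ι K a := by
  induction k with
  | zero => simp
  | succ k ih =>
    rw [pow_succ' x k, ← mul_assoc, comm_of_sq hx a, mul_assoc, ih, ← mul_assoc]

lemma comm_expA {x : ExteriorAlgebra K M} (hx : x ∈ (⋀[K]^2 M)) (a : M) (n : ℕ) :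
    ExteriorAlgebra.ι K a * expA (K := K) n x = expA (K := K) n x * ExteriorAlgebra.ι K a := by
  rw [expA, Finset.mul_sum, Finset.sum_mul]
  refine Finset.sum_congr rfl fun k _ => ?_
  rw [mul_smul_comm, smul_mul_assoc, comm_pow_of_sq hx a k]

omit [CharZero K] in
lemma contract_pow_mul (f : Module.Dual K M) {x : ExteriorAlgebra K M}
    (hx : x ∈ (⋀[K]^2 M)) (k : ℕ) (y : ExteriorAlgebra K M) :
    contractLeft f (x ^ k * y) = contractLeft f (x ^ k) * y + x ^ k * contractLeft f y := by
  induction k generalizing y with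
  | zero => simp
  | succ k ih =>
    rw [pow_succ' x k, mul_assoc, contract_mul_of_sq f hx (x ^ k * y), ih y,
      contract_mul_of_sq f hx (x ^ k)]
    simp only [mul_add, add_mul, mul_assoc]
    abel

lemma contract_expA_mul (f : Module.Dual K M) {x : ExteriorAlgebra K M}
    (hx : x ∈ (⋀[K]^2 M)) (n : ℕ) (y : ExteriorAlgebra K M) :
    contractLeft f (expA (K := K) n x * y) =
      contractLeft f (expA (K := K) n x) * y + expA (K := K) n x * contractLeft f y := by
  simp only [expA, Finset.sum_mul, map_sum]
  rw [← Finset.sum_add_distrib]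
  refine Finset.sum_congr rfl fun k _ => ?_
  rw [smul_mul_assoc, map_smul, map_smul, contract_pow_mul f hx k y, smul_add, smul_mul_assoc,
    smul_mul_assoc]

end PureSpinorAux

set_option maxHeartbeats 2000000 in
set_option synthInstance.maxHeartbeats 800000 in
open PureSpinorAux in
theorem pure_spinors_stmt5 {K V : Type*} [Field K] [CharZero K] [AddCommGroup V] [Module K V]
    [FiniteDimensional K V]
    (Q : Submodule K V)
    (ω : ExteriorAlgebra K (Module.Dual K V)) (hω : ω ∈ (⋀[K]^2 (Module.Dual K V)))
    (θ : ExteriorAlgebra K (Module.Dual K V))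
    (hθdeg : θ ∈ (Q.dualAnnihilator.map
        (ExteriorAlgebra.ι K (M := Module.Dual K V))) ^ (Module.finrank K V - Module.finrank K Q))
    (hθ : θ ≠ 0)
    (φ : ExteriorAlgebra K (Module.Dual K V))
    (hφ : φ = expA (K := K) (Module.finrank K V) (-ω) * θ) :
    ({w : V × Module.Dual K V | cliffordRho w φ = 0} =
      {w : V × Module.Dual K V | w.1 ∈ Q ∧ ∀ q ∈ Q,
        CliffordAlgebra.contractLeft (Module.Dual.eval K V q)
          (CliffordAlgebra.contractLeft (Module.Dual.eval K V w.1) ω) =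
        CliffordAlgebra.contractLeft (Module.Dual.eval K V q) (ExteriorAlgebra.ι K w.2)}) ∧
    (∀ v : V, (∃ α : Module.Dual K V, cliffordRho (v, α) φ = 0) ↔ v ∈ Q) ∧
    (∀ v : V, cliffordRho (v, (0 : Module.Dual K V)) φ = 0 ↔
      (v ∈ Q ∧ ∀ q ∈ Q,
        CliffordAlgebra.contractLeft (Module.Dual.eval K V q)
          (CliffordAlgebra.contractLeft (Module.Dual.eval K V v) ω) = 0)) := by
  classical
  set n := Module.finrank K V with hn
  set A := Q.dualAnnihilator with hA
  set m := n - Module.finrank K Q with hm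
  set S := A.map (ExteriorAlgebra.ι K (M := Module.Dual K V)) with hS
  have hMV : Module.finrank K (Module.Dual K V) = n := Subspace.dual_finrank_eq
  have hQn : Module.finrank K Q ≤ n := Submodule.finrank_le Q
  have hmA : Module.finrank K A = m := by
    have h1 := Submodule.finrank_quotient_add_finrank Q
    have h2 : Module.finrank K (V ⧸ Q) = Module.finrank K A :=
      (Subspace.quotEquivAnnihilator Q).finrank_eq
    omega
  have hbot : ∀ k, n < k → (⋀[K]^k (Module.Dual K V)) = ⊥ := fun k hk =>
    exteriorPower_eq_bot (by rw [hMV]; exact hk)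
  have hSbot : S ^ (m + 1) = ⊥ := map_sub_pow_bot A (by omega)
  have hθR : θ ∈ (⋀[K]^m (Module.Dual K V)) := by
    refine pow_le_pow_of_le ?_ m hθdeg
    rintro _ ⟨a, _, rfl⟩
    exact LinearMap.mem_range_self _ _
  have hωn : -ω ∈ (⋀[K]^2 (Module.Dual K V)) := neg_mem hω
  have hE : IsUnit (expA (K := K) n (-ω)) := isUnit_expA hωn (hbot _ (by omega))
  -- contraction by elements of Q kills θ
  have hdθQ : ∀ q ∈ Q, CliffordAlgebra.contractLeft (Module.Dual.eval K V q) θ = 0 := by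
    intro q hq
    refine Submodule.pow_induction_on_left (M := S)
      (C := fun z => CliffordAlgebra.contractLeft (Module.Dual.eval K V q) z = 0)
      (fun r => show CliffordAlgebra.contractLeft (Module.Dual.eval K V q)
        (algebraMap K _ r) = 0 from by
        rw [Algebra.algebraMap_eq_smul_one, map_smul, contractLeft_one, smul_zero])
      (fun x y hx hy => by
        show CliffordAlgebra.contractLeft (Module.Dual.eval K V q) (x + y) = 0
        rw [map_add, show CliffordAlgebra.contractLeft (Module.Dual.eval K V q) x = 0 from hx,
          show CliffordAlgebra.contractLeft (Module.Dual.eval K V q) y = 0 from hy, add_zero])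
      ?_ hθdeg
    rintro _ ⟨a, haA, rfl⟩ x hx
    have hx' : CliffordAlgebra.contractLeft (Module.Dual.eval K V q) x = 0 := hx
    have haq : a q = 0 := (Submodule.mem_dualAnnihilator a).mp haA q hq
    show CliffordAlgebra.contractLeft (Module.Dual.eval K V q)
      (ExteriorAlgebra.ι K a * x) = 0
    rw [contractLeft_ι_mul, hx', mul_zero, sub_zero, Module.Dual.eval_apply, haq, zero_smul]
  -- the key reduction
  have hmain : ∀ (v : V) (α : Module.Dual K V), cliffordRho (v, α) φ = 0 ↔
      (v ∈ Q ∧ ∀ q ∈ Q,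
        CliffordAlgebra.contractLeft (Module.Dual.eval K V q)
          (CliffordAlgebra.contractLeft (Module.Dual.eval K V v) ω) =
        CliffordAlgebra.contractLeft (Module.Dual.eval K V q) (ExteriorAlgebra.ι K α)) := by
    intro v α
    set f := Module.Dual.eval K V v with hf
    obtain ⟨γ, hγ⟩ := contract_sq_mem f hω
    set E := expA (K := K) n (-ω) with hEdef
    set δ := α - γ with hδ
    have c1 : ExteriorAlgebra.ι K γ * E = E * ExteriorAlgebra.ι K γ := comm_expA hωn γ n
    have c2 : ExteriorAlgebra.ι K α * E = E * ExteriorAlgebra.ι K α := comm_expA hωn α n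
    have key : cliffordRho (v, α) φ =
        E * (CliffordAlgebra.contractLeft f θ + ExteriorAlgebra.ι K δ * θ) := by
      rw [hφ]
      show CliffordAlgebra.contractLeft f (E * θ) + ExteriorAlgebra.ι K α * (E * θ) = _
      rw [contract_expA_mul f hωn n θ, contract_expA f hωn (hbot _ (by omega))]
      have hdf : CliffordAlgebra.contractLeft f (-ω) = -(ExteriorAlgebra.ι K γ) := by
        rw [map_neg, hγ]
      rw [hdf]
      have e1 : ExteriorAlgebra.ι K α * (E * θ) = E * (ExteriorAlgebra.ι K α * θ) := by
        rw [← mul_assoc, c2, mul_assoc]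
      have e2 : -(ExteriorAlgebra.ι K γ) * E * θ = -(E * (ExteriorAlgebra.ι K γ * θ)) := by
        rw [neg_mul, c1, neg_mul, mul_assoc]
      rw [e1, e2, hδ, map_sub, sub_mul, mul_add, mul_sub]
      abel
    rw [key, hE.mul_right_eq_zero]
    have hd1 : CliffordAlgebra.contractLeft f θ ∈ (⋀[K]^(m - 1) (Module.Dual K V)) :=
      (contract_lower f hθR).1
    have hd2 : ExteriorAlgebra.ι K δ * θ ∈ (⋀[K]^(m + 1) (Module.Dual K V)) := by
      have h := Submodule.mul_mem_mul
        (LinearMap.mem_range_self (ExteriorAlgebra.ι K (M := Module.Dual K V)) δ) hθR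
      rwa [← pow_succ'] at h
    constructor
    · intro h
      obtain ⟨h1, h2⟩ := homogeneous_split (show m - 1 ≠ m + 1 by omega) hd1 hd2 h
      have hvQ : v ∈ Q := by
        by_contra hv
        obtain ⟨a, haA, hav⟩ : ∃ a ∈ A, a v ≠ 0 := by
          by_contra hall
          push_neg at hall
          exact hv ((Subspace.forall_mem_dualAnnihilator_apply_eq_zero_iff Q v).mp hall)
        have hιθ : ExteriorAlgebra.ι K a * θ = 0 := by
          have h3 := Submodule.mul_mem_mul (Submodule.mem_map_of_mem (f := ExteriorAlgebra.ι K (M := Module.Dual K V)) haA) hθdeg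
          rw [← pow_succ', hSbot, Submodule.mem_bot] at h3
          exact h3
        have h4 : CliffordAlgebra.contractLeft f (ExteriorAlgebra.ι K a * θ) =
            f a • θ - ExteriorAlgebra.ι K a * CliffordAlgebra.contractLeft f θ :=
          contractLeft_ι_mul f a θ
        rw [hιθ, map_zero, h1, mul_zero, sub_zero] at h4
        have h5 : a v • θ = 0 := by
          rw [hf, Module.Dual.eval_apply] at h4
          exact h4.symm
        rcases smul_eq_zero.mp h5 with h6 | h6
        · exact hav h6
        · exact hθ h6
      refine ⟨hvQ, fun q hq => ?_⟩
      rw [← hγ, contractLeft_ι, contractLeft_ι]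
      have h5 : CliffordAlgebra.contractLeft (Module.Dual.eval K V q)
          (ExteriorAlgebra.ι K δ * θ) = (Module.Dual.eval K V q) δ • θ -
          ExteriorAlgebra.ι K δ * CliffordAlgebra.contractLeft (Module.Dual.eval K V q) θ :=
        contractLeft_ι_mul (Module.Dual.eval K V q) δ θ
      rw [h2, map_zero, hdθQ q hq, mul_zero, sub_zero] at h5
      have hδq : δ q = 0 := by
        have h6 : δ q • θ = 0 := by
          rw [Module.Dual.eval_apply] at h5
          exact h5.symm
        rcases smul_eq_zero.mp h6 with h7 | h7
        · exact h7
        · exact absurd h7 hθ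
      have h8 : α q = γ q := by
        have : (α - γ) q = 0 := hδq
        simpa [sub_eq_zero, LinearMap.sub_apply] using this
      rw [Module.Dual.eval_apply, Module.Dual.eval_apply, h8]
    · rintro ⟨hvQ, hcond⟩
      have h1 : CliffordAlgebra.contractLeft f θ = 0 := hdθQ v hvQ
      have hδA : δ ∈ A := by
        rw [hA, Submodule.mem_dualAnnihilator]
        intro q hq
        have h2 := hcond q hq
        rw [← hγ, contractLeft_ι, contractLeft_ι, Module.Dual.eval_apply,
          Module.Dual.eval_apply] at h2
        have h3 : γ q = α q := (ExteriorAlgebra.algebraMap_inj (Module.Dual K V) (γ q) (α q)).mp h2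
        show (α - γ) q = 0
        simp [h3]
      have h2 : ExteriorAlgebra.ι K δ * θ = 0 := by
        have h3 := Submodule.mul_mem_mul (Submodule.mem_map_of_mem (f := ExteriorAlgebra.ι K (M := Module.Dual K V)) hδA) hθdeg
        rw [← pow_succ', hSbot, Submodule.mem_bot] at h3
        exact h3
      rw [h1, h2, add_zero]
  refine ⟨?_, ?_, ?_⟩
  · ext w
    simp only [Set.mem_setOf_eq]
    exact hmain w.1 w.2
  · intro v
    constructor
    · rintro ⟨α, hα⟩
      exact ((hmain v α).mp hα).1
    · intro hv
      obtain ⟨γ, hγ⟩ := contract_sq_mem (Module.Dual.eval K V v) hω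
      exact ⟨γ, (hmain v γ).mpr ⟨hv, fun q hq => by rw [← hγ]⟩⟩
  · intro v
    rw [hmain v 0]
    simp only [map_zero]
end

section
/- Let V be a finite-dimensional vector space and 𝕍 = V ⊕ V*. For any w = v⊕α ∈ 𝕍 and any φ, ψ ∈ ∧V*, one has (-1)^{|φ|}( -(ρ(w)φ)ᵀ ∧ ψ + φᵀ ∧ ρ(w)ψ ) = ι(v)(φᵀ ∧ ψ), where φ has pure parity |φ|. -/
set_option synthInstance.maxHeartbeats 1000000
set_option maxHeartbeats 1000000

open ExteriorAlgebra CliffordAlgebra Module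

/-- The reversal anti-automorphism `ᵀ` of the exterior algebra `∧ V*` (identity on `V*`). -/
noncomputable def revE {K V : Type*} [Field K] [AddCommGroup V] [Module K V]
    (x : ExteriorAlgebra K (Module.Dual K V)) : ExteriorAlgebra K (Module.Dual K V) :=
  CliffordAlgebra.reverse (Q := (0 : QuadraticForm K (Module.Dual K V))) x

section Aux


open CliffordAlgebra

variable {R M : Type*} [CommRing R] [AddCommGroup M] [Module R M]
  {Q : QuadraticForm R M} (f : Module.Dual R M)

local infixl:70 "⌋" => contractLeft (Q := Q)

theorem leib0 {x : CliffordAlgebra Q} (hx : x ∈ evenOdd Q 0) (y : CliffordAlgebra Q) :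
    f⌋(x * y) = (f⌋x) * y + x * (f⌋y) := by
  induction x, hx using even_induction generalizing y with
  | algebraMap r =>
    simp [contractLeft_algebraMap_mul, contractLeft_algebraMap, Algebra.smul_def]
  | add a b ha hb iha ihb => simp only [add_mul, map_add, iha, ihb]; abel
  | ι_mul_ι_mul m₁ m₂ a ha ih =>
    simp only [mul_assoc, contractLeft_ι_mul, ih, mul_sub, sub_mul, smul_mul_assoc,
      mul_smul_comm, mul_add, add_mul, map_sub, map_smul, smul_sub]
    abel

theorem leib1 {x : CliffordAlgebra Q} (hx : x ∈ evenOdd Q 1) (y : CliffordAlgebra Q) :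
    f⌋(x * y) = (f⌋x) * y - x * (f⌋y) := by
  induction x, hx using odd_induction generalizing y with
  | ι v => simp [contractLeft_ι_mul, contractLeft_ι, Algebra.smul_def]
  | add a b ha hb iha ihb => simp only [add_mul, map_add, iha, ihb]; abel
  | ι_mul_ι_mul m₁ m₂ a ha ih =>
    simp only [mul_assoc, contractLeft_ι_mul, ih, mul_sub, sub_mul, smul_mul_assoc,
      mul_smul_comm, mul_add, add_mul, map_sub, map_smul, smul_sub]
    abel

theorem revc0 {x : CliffordAlgebra Q} (hx : x ∈ evenOdd Q 0) :
    reverse (Q := Q) (f⌋x) = -(f⌋reverse (Q := Q) x) := by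
  induction x, hx using even_induction with
  | algebraMap r => simp [contractLeft_algebraMap]
  | add a b ha hb iha ihb => simp only [map_add, iha, ihb]; abel
  | ι_mul_ι_mul m₁ m₂ a ha ih =>
    have ha' : reverse (Q := Q) a ∈ evenOdd Q 0 := (reverse_mem_evenOdd_iff Q).mpr ha
    simp only [mul_assoc, contractLeft_ι_mul, map_sub, map_smul, reverse.map_mul, reverse_ι]
    rw [leib0 f ha', ih]
    simp only [contractLeft_ι_mul, contractLeft_ι, mul_sub, sub_mul, smul_mul_assoc,
      mul_smul_comm, ← Algebra.commutes, ← Algebra.smul_def, neg_add, neg_sub, neg_neg, neg_mul, mul_assoc]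
    abel

theorem revc1 {x : CliffordAlgebra Q} (hx : x ∈ evenOdd Q 1) :
    reverse (Q := Q) (f⌋x) = f⌋reverse (Q := Q) x := by
  induction x, hx using odd_induction with
  | ι v => simp [contractLeft_ι, reverse_ι]
  | add a b ha hb iha ihb => simp only [map_add, iha, ihb]
  | ι_mul_ι_mul m₁ m₂ a ha ih =>
    have ha' : reverse (Q := Q) a ∈ evenOdd Q 1 := (reverse_mem_evenOdd_iff Q).mpr ha
    simp only [mul_assoc, contractLeft_ι_mul, map_sub, map_smul, reverse.map_mul, reverse_ι]
    rw [leib1 f ha', ih]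
    simp only [contractLeft_ι_mul, contractLeft_ι, mul_sub, sub_mul, smul_mul_assoc,
      mul_smul_comm, ← Algebra.commutes, ← Algebra.smul_def, neg_add, neg_sub, neg_neg, neg_mul, mul_assoc]
    abel

set_option synthInstance.maxHeartbeats 1000000 in
set_option maxHeartbeats 1000000 in
theorem pure_spinors_stmt6_aux {K V : Type*} [Field K] [CharZero K] [AddCommGroup V] [Module K V]
    [FiniteDimensional K V]
    (w : V × Module.Dual K V) (φ ψ : ExteriorAlgebra K (Module.Dual K V))
    (i : ZMod 2)
    (hφ : φ ∈ CliffordAlgebra.evenOdd (0 : QuadraticForm K (Module.Dual K V)) i) :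
    ((-1 : K) ^ i.val) •
      (-(CliffordAlgebra.reverse (Q := (0 : QuadraticForm K (Module.Dual K V)))
          (CliffordAlgebra.contractLeft (Module.Dual.eval K V w.1) φ + ExteriorAlgebra.ι K w.2 * φ) * ψ)
        + CliffordAlgebra.reverse (Q := (0 : QuadraticForm K (Module.Dual K V))) φ *
          (CliffordAlgebra.contractLeft (Module.Dual.eval K V w.1) ψ + ExteriorAlgebra.ι K w.2 * ψ)) =
    CliffordAlgebra.contractLeft (Module.Dual.eval K V w.1)
      (CliffordAlgebra.reverse (Q := (0 : QuadraticForm K (Module.Dual K V))) φ * ψ) := by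
  set f := Module.Dual.eval K V w.1
  have hι : ExteriorAlgebra.ι K (M := Module.Dual K V) = CliffordAlgebra.ι (0 : QuadraticForm K (Module.Dual K V)) := rfl
  have hφ' : CliffordAlgebra.reverse (Q := (0 : QuadraticForm K (Module.Dual K V))) φ ∈ CliffordAlgebra.evenOdd (0 : QuadraticForm K (Module.Dual K V)) i :=
    (reverse_mem_evenOdd_iff _).mpr hφ
  rw [hι, map_add, reverse.map_mul, reverse_ι]
  fin_cases i
  · rw [revc0 f hφ, leib0 f hφ' ψ]
    simp only [ZMod.val_zero, pow_zero, one_smul, add_mul, mul_add, neg_mul, neg_add, neg_neg,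
      mul_assoc]
    norm_num [ZMod.val]
    abel
  · rw [revc1 f hφ, leib1 f hφ' ψ]
    simp only [ZMod.val_one, pow_one, neg_smul, one_smul, add_mul, mul_add, neg_mul, neg_add,
      neg_neg, mul_assoc, smul_add, smul_neg]
    norm_num [ZMod.val]
    abel

end Aux

/-- for `w = v ⊕ α ∈ V ⊕ V*` and `φ, ψ ∈ ∧V*` with `φ` of pure parity `i`,
`(-1)^{|φ|} ( -(ρ(w)φ)ᵀ ∧ ψ + φᵀ ∧ ρ(w)ψ ) = ι(v)(φᵀ ∧ ψ)`,
where `ᵀ` is the reversal anti-automorphism of the exterior algebra. -/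


theorem pure_spinors_stmt6 {K V : Type*} [Field K] [CharZero K] [AddCommGroup V] [Module K V]
    [FiniteDimensional K V]
    (w : V × Module.Dual K V) (φ ψ : ExteriorAlgebra K (Module.Dual K V))
    (i : ZMod 2)
    (hφ : φ ∈ CliffordAlgebra.evenOdd (0 : QuadraticForm K (Module.Dual K V)) i) :
    ((-1 : K) ^ i.val) •
      (-(revE (cliffordRho w φ) * ψ) + revE φ * cliffordRho w ψ) =
    CliffordAlgebra.contractLeft (Module.Dual.eval K V w.1) (revE φ * ψ) := by
  simpa only [cliffordRho, revE] using pure_spinors_stmt6_aux w φ ψ i hφ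
end
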